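/- Let (D_λ)_{λ∈Λ} be a family of integral domains, U an ultrafilter in B and F an ultrafilter on Λ. Then the containment (0)_F ⊆ (U) of ideals of R = ∏_{λ∈Λ} D_λ holds if and only if F = F_U. In particular, every prime ideal of R contains a unique minimal prime ideal of R. -/

import Mathlib

/-!
Common setup: `Λ` is an index set, `D λ` a family of commutative rings,
`R = ∏ λ, D λ` the product ring, and
`B = ∏ λ, P(max (D λ))` the product Boolean algebra of the power sets of the
sets of maximal ideals, realized as the Pi type `∀ l, Set (MaximalSpectrum (D l))`
with its componentwise Boolean algebra structure (meet = componentwise ∩,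
join = componentwise ∪, `⊥ = (∅)_λ`, complement componentwise, order = componentwise ⊆).
-/

variable {Λ : Type*} {D : Λ → Type*}

/-- `S(a) = (V(a_λ))_λ ∈ B`, where `V(x)` is the set of maximal ideals containing `x`. -/
def SFam [∀ l, CommRing (D l)] (a : ∀ l, D l) : ∀ l, Set (MaximalSpectrum (D l)) :=
  fun l => {P | a l ∈ P.asIdeal}

/-- `z(x) = {λ | x_λ = 0}`. -/
def ZFam [∀ l, CommRing (D l)] (x : ∀ l, D l) : Set Λ := {l | x l = 0}

/-- A filter in a Boolean algebra: a nonempty subset not containing `⊥`, closed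
under meets, and upward closed. -/
def IsBFilter {B : Type*} [BooleanAlgebra B] (U : Set B) : Prop :=
  U.Nonempty ∧ ⊥ ∉ U ∧ (∀ X ∈ U, ∀ Y ∈ U, X ⊓ Y ∈ U) ∧ (∀ Y ∈ U, ∀ Z, Y ≤ Z → Z ∈ U)

/-- An ultrafilter in a Boolean algebra: a filter containing `Y` or `Yᶜ` for every `Y`. -/
def IsBUltrafilter {B : Type*} [BooleanAlgebra B] (U : Set B) : Prop :=
  IsBFilter U ∧ ∀ Y, Y ∈ U ∨ Yᶜ ∈ U

/-- Property (+): for all `r` and all nonzero `a` there is `d` lying in every maximal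
ideal containing `a` but not `r`, and in no maximal ideal containing `r`. -/
def PropertyPlus (A : Type*) [CommRing A] : Prop :=
  ∀ r a : A, a ≠ 0 → ∃ d : A,
    (∀ M : Ideal A, M.IsMaximal → a ∈ M → r ∉ M → d ∈ M) ∧
    (∀ M : Ideal A, M.IsMaximal → r ∈ M → d ∉ M)

/-- Property (++): for every `r` there is `d` with `D(r) = V(d)`, i.e. the maximal
ideals containing `d` are exactly those not containing `r`. -/
def PropertyPlusPlus (A : Type*) [CommRing A] : Prop :=
  ∀ r : A, ∃ d : A, ∀ P : MaximalSpectrum A, d ∈ P.asIdeal ↔ r ∉ P.asIdeal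

section Aux

open Classical in
/-- indicator idempotent -/
noncomputable def eIdem [∀ l, CommRing (D l)] (A : Set Λ) : ∀ l, D l :=
  fun l => if l ∈ A then 1 else 0

variable [∀ l, CommRing (D l)] [∀ l, IsDomain (D l)]

lemma eIdem_mem (A : Set Λ) {l : Λ} (h : l ∈ A) : eIdem (D := D) A l = 1 := by
  simp [eIdem, h]

lemma eIdem_not_mem (A : Set Λ) {l : Λ} (h : l ∉ A) : eIdem (D := D) A l = 0 := by
  simp [eIdem, h]

/-- the ideal `(0)_G` for an ultrafilter `G` -/
def zId (G : Ultrafilter Λ) : Ideal (∀ l, D l) where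
  carrier := {x | ZFam x ∈ G}
  zero_mem' := by
    show ZFam (0 : ∀ l, D l) ∈ G
    have : ZFam (0 : ∀ l, D l) = Set.univ := by ext l; simp [ZFam]
    rw [this]; exact Filter.univ_mem
  add_mem' := by
    intro a b ha hb
    refine G.toFilter.mem_of_superset (Filter.inter_mem ha hb) ?_
    rintro l ⟨h1, h2⟩
    simp only [ZFam, Set.mem_setOf_eq] at *
    rw [Pi.add_apply, h1, h2, add_zero]
  smul_mem' := by
    intro c x hx
    refine G.toFilter.mem_of_superset hx ?_
    intro l h1
    simp only [ZFam, Set.mem_setOf_eq] at *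
    rw [smul_eq_mul, Pi.mul_apply, h1, mul_zero]

lemma mem_zId {G : Ultrafilter Λ} {x : ∀ l, D l} : x ∈ zId G ↔ ZFam x ∈ G := Iff.rfl

instance zId_prime (G : Ultrafilter Λ) : (zId (D := D) G).IsPrime := by
  constructor
  · intro h
    rw [Ideal.eq_top_iff_one] at h
    have : ZFam (1 : ∀ l, D l) = ∅ := by ext l; simp [ZFam]
    rw [mem_zId, this] at h
    exact G.toFilter.empty_notMem h
  · intro x y hxy
    have : ZFam (x * y) = ZFam x ∪ ZFam y := by
      ext l; simp [ZFam, mul_eq_zero]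
    rw [mem_zId, this, Ultrafilter.union_mem_iff] at hxy
    exact hxy

/-- the ultrafilter associated to a prime ideal of the product -/
noncomputable def FP (P : Ideal (∀ l, D l)) (hP : P.IsPrime) : Ultrafilter Λ := by
  refine Ultrafilter.ofComplNotMemIff
    { sets := {A | eIdem Aᶜ ∈ P}
      univ_sets := by
        have : eIdem (D := D) (Set.univ : Set Λ)ᶜ = 0 := by
          ext l; simp [eIdem]
        simp only [Set.mem_setOf_eq, this]; exact P.zero_mem
      sets_of_superset := by
        intro A B hA hAB
        simp only [Set.mem_setOf_eq] at *
        have : eIdem (D := D) Bᶜ = eIdem Bᶜ * eIdem Aᶜ := by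
          ext l
          by_cases h : l ∈ B
          · simp [eIdem_not_mem _ (by simp [h] : l ∉ Bᶜ)]
          · have hA' : l ∉ A := fun h' => h (hAB h')
            simp [eIdem_mem _ (by simp [h] : l ∈ Bᶜ), eIdem_mem _ (by simp [hA'] : l ∈ Aᶜ)]
        rw [this]
        exact P.mul_mem_left _ hA
      inter_sets := by
        intro A B hA hB
        simp only [Set.mem_setOf_eq] at *
        have : eIdem (D := D) (A ∩ B)ᶜ
            = eIdem Aᶜ + eIdem Bᶜ - eIdem Aᶜ * eIdem Bᶜ := by
          ext l
          by_cases hA' : l ∈ A <;> by_cases hB' : l ∈ B <;>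
            simp [eIdem, hA', hB']
        rw [this]
        exact Ideal.sub_mem _ (P.add_mem hA hB) (P.mul_mem_left _ hB) } ?_
  · intro A
    simp only [Filter.mem_mk, Set.mem_setOf_eq, compl_compl]
    constructor
    · intro h
      have h0 : eIdem (D := D) Aᶜ * eIdem A = 0 := by
        ext l
        by_cases hA : l ∈ A
        · simp [eIdem_not_mem _ (by simp [hA] : l ∉ Aᶜ)]
        · simp [eIdem_not_mem _ hA]
      have := hP.mem_or_mem (h0 ▸ P.zero_mem)
      tauto
    · intro h h'
      have hone : eIdem (D := D) Aᶜ + eIdem A = 1 := by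
        ext l
        by_cases hA : l ∈ A
        · simp [eIdem_not_mem _ (by simp [hA] : l ∉ Aᶜ), eIdem_mem _ hA]
        · simp [eIdem_mem _ (by simp [hA] : l ∈ Aᶜ), eIdem_not_mem _ hA]
      exact hP.ne_top (Ideal.eq_top_iff_one _ |>.2 (hone ▸ P.add_mem h h'))

lemma mem_FP {P : Ideal (∀ l, D l)} {hP : P.IsPrime} {A : Set Λ} :
    A ∈ FP P hP ↔ eIdem (D := D) Aᶜ ∈ P := Iff.rfl

lemma zId_FP_le (P : Ideal (∀ l, D l)) (hP : P.IsPrime) : zId (FP P hP) ≤ P := by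
  intro x hx
  rw [mem_zId, mem_FP] at hx
  have : x = x * eIdem (ZFam x)ᶜ := by
    ext l
    by_cases h : x l = 0
    · simp [h]
    · simp [eIdem_mem _ (by simpa [ZFam] using h : l ∈ (ZFam x)ᶜ)]
  rw [this]
  exact P.mul_mem_left _ hx

lemma FP_eq_of_le {Q P : Ideal (∀ l, D l)} (hQ : Q.IsPrime) (hP : P.IsPrime) (hle : Q ≤ P) :
    FP Q hQ = FP P hP := by
  have hsub : ∀ A : Set Λ, A ∈ FP Q hQ → A ∈ FP P hP := fun A hA => hle hA
  ext A
  constructor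
  · exact hsub A
  · intro hA
    by_contra h
    have := hsub Aᶜ (Ultrafilter.compl_mem_iff_notMem.2 h)
    exact (Ultrafilter.compl_mem_iff_notMem.1 this) hA

lemma FP_zId (G : Ultrafilter Λ) : FP (zId (D := D) G) (zId_prime G) = G := by
  ext A
  rw [mem_FP, mem_zId]
  have : ZFam (eIdem (D := D) Aᶜ) = A := by
    ext l
    by_cases h : l ∈ A
    · simp [ZFam, eIdem_not_mem _ (by simp [h] : l ∉ Aᶜ), h]
    · simp [ZFam, eIdem_mem _ (by simp [h] : l ∈ Aᶜ), h]
  rw [this]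

lemma zId_minimal (G : Ultrafilter Λ) : zId (D := D) G ∈ minimalPrimes (∀ l, D l) := by
  rw [minimalPrimes_eq_minimals]
  refine ⟨zId_prime G, ?_⟩
  intro Q hQ hle
  have h1 : zId (FP Q hQ) ≤ Q := zId_FP_le Q hQ
  have h2 : FP Q hQ = G := by rw [FP_eq_of_le hQ (zId_prime G) hle, FP_zId]
  rw [h2] at h1
  exact h1

end Aux



/-- For integral domains `D l`, an ultrafilter `U` in `B` and an ultrafilter `F` on
`Λ`: the containment `(0)_F ⊆ (U)` holds if and only if `F = F_U`, where `F_U`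
consists of the sets of indices where an element of `U` has a nonempty component.
In particular, every prime ideal of `R` contains a unique minimal prime ideal. -/
theorem stmt_16 [∀ l, CommRing (D l)] [∀ l, IsDomain (D l)]
    (U : Set (∀ l, Set (MaximalSpectrum (D l)))) (hU : IsBUltrafilter U)
    (F : Ultrafilter Λ) :
    ({x : ∀ l, D l | ZFam x ∈ F} ⊆ {a : ∀ l, D l | SFam a ∈ U} ↔
      (∀ A : Set Λ, A ∈ F ↔ ∃ Y ∈ U, A = {l | Y l ≠ ∅})) ∧
    (∀ P : Ideal (∀ l, D l), P.IsPrime →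
      ∃! Q : Ideal (∀ l, D l), Q ∈ minimalPrimes (∀ l, D l) ∧ Q ≤ P) := by
  obtain ⟨⟨hne, hbot, hmeet, hup⟩, hultra⟩ := hU
  constructor
  · constructor
    · -- subset → F = F_U
      intro hsub A
      constructor
      · intro hA
        have hz : ZFam (eIdem (D := D) Aᶜ) = A := by
          ext l
          by_cases h : l ∈ A
          · simp [ZFam, eIdem_not_mem _ (by simp [h] : l ∉ Aᶜ), h]
          · simp [ZFam, eIdem_mem _ (by simp [h] : l ∈ Aᶜ), h]
        have hS : SFam (eIdem (D := D) Aᶜ) ∈ U := hsub (by simp only [Set.mem_setOf_eq, hz]; exact hA)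
        refine ⟨SFam (eIdem (D := D) Aᶜ), hS, ?_⟩
        ext l
        simp only [Set.mem_setOf_eq]
        constructor
        · intro h
          obtain ⟨M⟩ := (inferInstance : Nonempty (MaximalSpectrum (D l)))
          refine Set.nonempty_iff_ne_empty.1 ⟨M, ?_⟩
          simp [SFam, eIdem_not_mem _ (by simp [h] : l ∉ Aᶜ)]
        · intro h
          by_contra hA'
          apply h
          have : eIdem (D := D) Aᶜ l = 1 := eIdem_mem _ (by simp [hA'])
          ext M
          simp only [SFam, Set.mem_setOf_eq, this, Set.mem_empty_iff_false, iff_false]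
          exact fun h1 => M.isMaximal.ne_top (Ideal.eq_top_iff_one _ |>.2 h1)
      · rintro ⟨Y, hY, rfl⟩
        by_contra h
        have hAc : {l | Y l ≠ ∅}ᶜ ∈ F := Ultrafilter.compl_mem_iff_notMem.2 h
        set A := {l | Y l ≠ ∅} with hAdef
        have hz : ZFam (eIdem (D := D) A) = Aᶜ := by
          ext l
          by_cases h' : l ∈ A
          · simp [ZFam, eIdem_mem _ h', h']
          · simp [ZFam, eIdem_not_mem _ h', h']
        have hS : SFam (eIdem (D := D) A) ∈ U :=
          hsub (by simp only [Set.mem_setOf_eq, hz]; exact hAc)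
        have hmeet' := hmeet _ hS _ hY
        have hb : SFam (eIdem (D := D) A) ⊓ Y = ⊥ := by
          funext l
          by_cases h' : l ∈ A
          · have h1 : eIdem (D := D) A l = 1 := eIdem_mem _ h'
            have : SFam (eIdem (D := D) A) l = ∅ := by
              ext M
              simp only [SFam, Set.mem_setOf_eq, h1, Set.mem_empty_iff_false, iff_false]
              exact fun hm => M.isMaximal.ne_top (Ideal.eq_top_iff_one _ |>.2 hm)
            simp [this]
          · have : Y l = ∅ := by simpa [hAdef] using h'
            simp [this]
        rw [hb] at hmeet'
        exact hbot hmeet'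
    · -- F = F_U → subset
      intro hF x hx
      obtain ⟨Y, hY, hYx⟩ := (hF (ZFam x)).1 hx
      refine hup Y hY (SFam x) ?_
      intro l M hM
      have : l ∈ ZFam x := by
        rw [hYx]; exact fun h => by simp [h] at hM
      simp only [ZFam, Set.mem_setOf_eq] at this
      simp [SFam, this]
  · intro P hP
    refine ⟨zId (FP P hP), ⟨zId_minimal _, zId_FP_le P hP⟩, ?_⟩
    rintro Q ⟨hQmin, hQle⟩
    have hQprime : Q.IsPrime := (minimalPrimes_eq_minimals (R := ∀ l, D l) ▸ hQmin).1
    have h1 : zId (FP Q hQprime) ≤ Q := zId_FP_le Q hQprime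
    have h2 : FP Q hQprime = FP P hP := FP_eq_of_le hQprime hP hQle
    rw [h2] at h1
    have := (minimalPrimes_eq_minimals (R := ∀ l, D l) ▸ hQmin).2 (zId_prime (FP P hP)) h1
    exact le_antisymm this h1
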